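/- Let R = R₁ × ⋯ × R_N be a product of commutative rings with symmetric relations τᵢ on Rᵢ^#, and let τ_× be the relation on R^# defined by (aᵢ) τ_× (bᵢ) iff aᵢ τᵢ bᵢ whenever both aᵢ and bᵢ are non-units of Rᵢ. If a non-unit (aᵢ) ∈ R is τ_×-irreducible, then exactly one coordinate a_{i₀} is a non-unit (and all other coordinates are units). -/

import Mathlib

/-- `x` is a nonzero nonunit, i.e. an element of `R^#`. -/
def NNU {R : Type*} [CommRing R] (x : R) : Prop := x ≠ 0 ∧ ¬ IsUnit x

/-- `R` is présimplifiable: `x = x*y` implies `x = 0` or `y` is a unit. -/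
def Presimplifiable (R : Type*) [CommRing R] : Prop :=
  ∀ x y : R, x = x * y → x = 0 ∨ IsUnit y

/-- `R` is a strongly associate ring: `(a) = (b)` implies `a = u*b` for some unit `u`. -/
def StronglyAssociateRing (R : Type*) [CommRing R] : Prop :=
  ∀ a b : R, Ideal.span ({a} : Set R) = Ideal.span {b} → ∃ u : R, IsUnit u ∧ a = u * b

variable {R : Type*} [CommRing R]

/-- `a = u * ines.prod * ess.prod` is a U-factorization: the members of `ines`
(the inessential divisors) and `ess` (the essential divisors) are nonzero nonunits,
each inessential divisor `x` satisfies `(x * ess.prod) = (ess.prod)`, and omitting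
any essential divisor changes the ideal generated by the product of the essential
divisors. -/
def IsUFact (a u : R) (ines ess : List R) : Prop :=
  IsUnit u ∧ (∀ x ∈ ines, NNU x) ∧ (∀ x ∈ ess, NNU x) ∧
    a = u * ines.prod * ess.prod ∧
    (∀ x ∈ ines, Ideal.span ({x * ess.prod} : Set R) = Ideal.span ({ess.prod} : Set R)) ∧
    (∀ j < ess.length,
      Ideal.span ({ess.prod} : Set R) ≠ Ideal.span ({(ess.eraseIdx j).prod} : Set R))

/-- `a = u * l.prod` is a τ-factorization: `u` is a unit, the factors are nonzero
nonunits, and distinct factors are τ-related. -/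
def IsTauFact (τ : R → R → Prop) (a u : R) (l : List R) : Prop :=
  IsUnit u ∧ (∀ x ∈ l, NNU x) ∧ a = u * l.prod ∧ l.Pairwise τ

/-- A τ-U-factorization: a U-factorization whose underlying factorization is a
τ-factorization. -/
def IsTauUFact (τ : R → R → Prop) (a u : R) (ines ess : List R) : Prop :=
  IsUFact a u ines ess ∧ (ines ++ ess).Pairwise τ

/-- `a` is τ-irreducible: `a` is a nonunit and every τ-factorization of `a`
contains a factor generating the same principal ideal as `a`. -/
def TauIrred (τ : R → R → Prop) (a : R) : Prop :=
  ¬ IsUnit a ∧ ∀ u l, IsTauFact τ a u l →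
    ∃ b ∈ l, Ideal.span ({a} : Set R) = Ideal.span ({b} : Set R)

/-- `b` τ-divides `a`: `b` occurs as a factor in some τ-factorization of `a`. -/
def TauDivides (τ : R → R → Prop) (b a : R) : Prop :=
  ∃ u l, IsTauFact τ a u l ∧ b ∈ l

/-- `b` is an essential divisor in some τ-U-factorization of `a`. -/
def IsEssTauUDivisor (τ : R → R → Prop) (b a : R) : Prop :=
  ∃ u ines ess, IsTauUFact τ a u ines ess ∧ b ∈ ess

/-- `R` is a τ-BFR: every nonunit has a bound on the number of factors in any
τ-factorization. -/
def TauBFR (τ : R → R → Prop) : Prop :=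
  ∀ a : R, ¬ IsUnit a → ∃ N : ℕ, ∀ u l, IsTauFact τ a u l → l.length ≤ N

/-- `R` is a τ-U-BFR: every nonunit has a bound on the number of essential
divisors in any τ-U-factorization. -/
def TauUBFR (τ : R → R → Prop) : Prop :=
  ∀ a : R, ¬ IsUnit a → ∃ N : ℕ, ∀ u ines ess, IsTauUFact τ a u ines ess → ess.length ≤ N

/-- `R` is τ-présimplifiable: the only τ-factorizations of `x` containing `x`
as a factor are the trivial ones `x = λ * x`. -/
def TauPresimplifiable (τ : R → R → Prop) : Prop :=
  ∀ (x u : R) (l : List R), IsTauFact τ x u l → x ∈ l → l = [x]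

/-- `R` is τ-U-présimplifiable: every τ-U-factorization of every nonzero
nonunit has no nonunit inessential divisors. -/
def TauUPresimplifiable (τ : R → R → Prop) : Prop :=
  ∀ a : R, a ≠ 0 → ¬ IsUnit a →
    ∀ u ines ess, IsTauUFact τ a u ines ess → ∀ x ∈ ines, IsUnit x

/-- τ is refinable: replacing a factor of a τ-factorization by one of its own
τ-factorizations again yields a τ-factorization. -/
def TauRefinable (τ : R → R → Prop) : Prop :=
  ∀ (a u b u' : R) (l₁ l₂ m : List R),
    IsTauFact τ a u (l₁ ++ b :: l₂) → IsTauFact τ b u' m →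
      IsTauFact τ a (u * u') (l₁ ++ m ++ l₂)

/-- `R` is τ-U-refinable: refining an essential divisor of a τ-U-factorization by
one of its own τ-U-factorizations again yields a τ-U-factorization. -/
def TauURefinable (τ : R → R → Prop) : Prop :=
  ∀ (a u b u' : R) (ines ines' ess' e₁ e₂ : List R),
    IsTauUFact τ a u ines (e₁ ++ b :: e₂) → IsTauUFact τ b u' ines' ess' →
      IsTauUFact τ a (u * u') (ines ++ ines') (e₁ ++ ess' ++ e₂)

/-- `R` satisfies τ-ACCP. -/
def TauACCP (τ : R → R → Prop) : Prop :=
  ¬ ∃ c : ℕ → R, (∀ i, Ideal.span ({c i} : Set R) < Ideal.span ({c (i + 1)} : Set R)) ∧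
      ∀ i, TauDivides τ (c (i + 1)) (c i)

/-- `R` satisfies τ-U-ACCP. -/
def TauUACCP (τ : R → R → Prop) : Prop :=
  ¬ ∃ c : ℕ → R, (∀ i, Ideal.span ({c i} : Set R) < Ideal.span ({c (i + 1)} : Set R)) ∧
      ∀ i, IsEssTauUDivisor τ (c (i + 1)) (c i)

/-- `a ≅ b`: very strong associates. -/
def VSAssoc (a b : R) : Prop :=
  Ideal.span ({a} : Set R) = Ideal.span ({b} : Set R) ∧
    ((a = 0 ∧ b = 0) ∨ ∀ r : R, a = r * b → IsUnit r)

/-- `a` is τ-very strongly atomic: `a ≅ a`, `a` is a nonunit, and every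
τ-factorization of `a` is trivial. -/
def TauVSAtomic (τ : R → R → Prop) (a : R) : Prop :=
  ¬ IsUnit a ∧ VSAssoc a a ∧ ∀ u l, IsTauFact τ a u l → l.length = 1

/-- Two lists agree up to rearrangement and associates. -/
def AssocPerm (l l' : List R) : Prop :=
  ∃ l'' : List R, l'.Perm l'' ∧
    List.Forall₂ (fun x y => Ideal.span ({x} : Set R) = Ideal.span ({y} : Set R)) l l''

/-- The product relation `τ_×` on a product of rings: coordinates are related
whenever both are nonunits. -/
def TauX {ι : Type*} {S : ι → Type*} [∀ i, CommRing (S i)]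
    (τ : ∀ i, S i → S i → Prop) (a b : ∀ i, S i) : Prop :=
  ∀ i, ¬ IsUnit (a i) → ¬ IsUnit (b i) → τ i (a i) (b i)


/-- A τ_×-irreducible element of a finite product of rings has exactly one
non-unit coordinate. -/
theorem stmt16 {N : ℕ} {S : Fin N → Type*} [∀ i, CommRing (S i)]
    (τ : ∀ i, S i → S i → Prop) (hsym : ∀ i, Symmetric (τ i))
    (hsub : ∀ i, ∀ x y : S i, τ i x y → NNU x ∧ NNU y)
    (a : ∀ i, S i) (h : TauIrred (TauX τ) a) :
    ∃! i : Fin N, ¬ IsUnit (a i) := by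
  have piUnit : ∀ f : ∀ i, S i, IsUnit f ↔ ∀ i, IsUnit (f i) := by
    intro f
    constructor
    · intro h i; exact h.map (Pi.evalMonoidHom S i)
    · intro h
      choose g hg using fun i => (h i).exists_right_inv
      exact IsUnit.of_mul_eq_one (a := f) g (funext fun i => hg i)
  obtain ⟨hnu, hirr⟩ := h
  have hex : ∃ i, ¬ IsUnit (a i) := by
    by_contra hc
    push_neg at hc
    exact hnu ((piUnit a).mpr hc)
  obtain ⟨i, hi⟩ := hex
  refine ⟨i, hi, ?_⟩
  intro j hj
  by_contra hne
  -- two distinct nonunit coordinates i ≠ j; derive a contradiction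
  have hSi : Nontrivial (S i) := by
    by_contra hs
    haveI := not_nontrivial_iff_subsingleton.mp hs
    exact hi (isUnit_of_subsingleton _)
  have hSj : Nontrivial (S j) := by
    by_contra hs
    haveI := not_nontrivial_iff_subsingleton.mp hs
    exact hj (isUnit_of_subsingleton _)
  set b : ∀ k, S k := fun k => if h : k = i then h ▸ a i else 1 with hb
  set c : ∀ k, S k := fun k => if k = i then 1 else a k with hc
  have hbi : b i = a i := by simp [hb]
  have hbk : ∀ k, k ≠ i → b k = 1 := by intro k hk; simp [hb, hk]
  have hci : c i = 1 := by simp [hc]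
  have hck : ∀ k, k ≠ i → c k = a k := by intro k hk; simp [hc, hk]
  have hji : j ≠ i := hne
  have habc : a = b * c := by
    funext k
    by_cases hk : k = i
    · subst hk; simp [hbi, hci]
    · simp [hbk k hk, hck k hk]
  have hbNNU : NNU b := by
    constructor
    · intro h0
      have : b j = 0 := congrFun h0 j
      rw [hbk j hji] at this
      exact one_ne_zero this
    · intro hub
      exact hi (hbi ▸ (piUnit b).mp hub i)
  have hcNNU : NNU c := by
    constructor
    · intro h0
      have : c i = 0 := congrFun h0 i
      rw [hci] at this
      exact one_ne_zero this
    · intro huc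
      exact hj (hck j hji ▸ (piUnit c).mp huc j)
  have htau : TauX τ b c := by
    intro k hbk' hck'
    by_cases hk : k = i
    · subst hk; exact absurd (hci ▸ isUnit_one) hck'
    · exact absurd (hbk k hk ▸ isUnit_one) hbk'
  have hfact : IsTauFact (TauX τ) a 1 [b, c] := by
    refine ⟨isUnit_one, ?_, ?_, ?_⟩
    · intro x hx
      simp only [List.mem_cons, List.not_mem_nil, or_false, List.mem_singleton] at hx
      rcases hx with hx | hx
      · exact hx ▸ hbNNU
      · exact hx ▸ hcNNU
    · simp [habc, mul_assoc]
    · refine List.Pairwise.cons (fun y hy => ?_) (List.pairwise_singleton _ _)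
      simp only [List.mem_singleton] at hy
      exact hy ▸ htau
  obtain ⟨d, hd, hspan⟩ := hirr 1 [b, c] hfact
  have key : ∀ (k : Fin N), d k = 1 → IsUnit (a k) := by
    intro k hdk
    have hdmem : d ∈ Ideal.span ({a} : Set (∀ i, S i)) := by
      rw [hspan]; exact Ideal.mem_span_singleton_self d
    obtain ⟨r, hr⟩ := Ideal.mem_span_singleton'.mp hdmem
    have : r k * a k = 1 := by
      have := congrFun hr k
      rw [hdk] at this; exact this
    exact IsUnit.of_mul_eq_one _ (by rw [mul_comm]; exact this)
  simp only [List.mem_cons, List.not_mem_nil, or_false, List.mem_singleton] at hd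
  rcases hd with hd | hd
  · -- d = b, so d j = 1, a j unit: contradiction
    exact hj (key j (by rw [hd, hbk j hji]))
  · -- d = c, so d i = 1
    exact hi (key i (by rw [hd, hci]))
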